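/- For every n ≥ 1, the sum over i from 1 to n of 2^(padicValNat 2 i) is at most n · (Nat.log 2 n + 2). -/

import Mathlib

theorem stmt6 (n : ℕ) (hn : 1 ≤ n) :
    ∑ i ∈ Finset.Icc 1 n, 2 ^ padicValNat 2 i ≤ n * (Nat.log 2 n + 2) := by
  induction n using Nat.strong_induction_on with
  | _ n ih =>
  rcases Nat.lt_or_ge n 2 with h2 | h2
  · interval_cases n
    simp [padicValNat.one]
  · have hhalf : 1 ≤ n / 2 := by omega
    have hlt : n / 2 < n := by omega
    have IH := ih (n / 2) hlt hhalf
    haveI : Fact (Nat.Prime 2) := ⟨Nat.prime_two⟩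
    -- split into non-divisible and divisible by 2
    rw [← Finset.sum_filter_add_sum_filter_not (Finset.Icc 1 n) (fun i => 2 ∣ i)]
    -- even part
    have himg : (Finset.Icc 1 n).filter (fun i => 2 ∣ i)
        = (Finset.Icc 1 (n / 2)).image (fun k => 2 * k) := by
      ext i
      simp only [Finset.mem_filter, Finset.mem_image, Finset.mem_Icc]
      constructor
      · rintro ⟨⟨h1, hle⟩, hd⟩
        exact ⟨i / 2, ⟨by omega, by omega⟩, by omega⟩
      · rintro ⟨k, ⟨hk1, hk2⟩, rfl⟩
        exact ⟨⟨by omega, by omega⟩, ⟨k, rfl⟩⟩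
    have heven : ∑ i ∈ (Finset.Icc 1 n).filter (fun i => 2 ∣ i), 2 ^ padicValNat 2 i
        = 2 * ∑ k ∈ Finset.Icc 1 (n / 2), 2 ^ padicValNat 2 k := by
      rw [himg, Finset.sum_image (by intro x _ y _ h; simp only at h; omega)]
      rw [Finset.mul_sum]
      refine Finset.sum_congr rfl fun k hk => ?_
      simp only [Finset.mem_Icc] at hk
      have hk0 : k ≠ 0 := by omega
      rw [padicValNat.mul (by norm_num) hk0, padicValNat.self (by norm_num), pow_add,
        pow_one]
    -- odd part
    have hodd : ∑ i ∈ (Finset.Icc 1 n).filter (fun i => ¬ 2 ∣ i), 2 ^ padicValNat 2 i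
        ≤ n := by
      calc ∑ i ∈ (Finset.Icc 1 n).filter (fun i => ¬ 2 ∣ i), 2 ^ padicValNat 2 i
          = ∑ i ∈ (Finset.Icc 1 n).filter (fun i => ¬ 2 ∣ i), 1 := by
            refine Finset.sum_congr rfl fun i hi => ?_
            simp only [Finset.mem_filter] at hi
            rw [padicValNat.eq_zero_of_not_dvd hi.2, pow_zero]
        _ ≤ ∑ i ∈ Finset.Icc 1 n, 1 := Finset.sum_le_sum_of_subset (Finset.filter_subset _ _)
        _ = n := by simp
    -- log arithmetic
    have hlogd : Nat.log 2 (n / 2) = Nat.log 2 n - 1 := Nat.log_div_base 2 n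
    have hlogpos : 0 < Nat.log 2 n := Nat.log_pos (by norm_num) h2
    have hkey : 2 * ∑ k ∈ Finset.Icc 1 (n / 2), 2 ^ padicValNat 2 k
        ≤ n * (Nat.log 2 n + 1) := by
      calc 2 * ∑ k ∈ Finset.Icc 1 (n / 2), 2 ^ padicValNat 2 k
          ≤ 2 * ((n / 2) * (Nat.log 2 (n / 2) + 2)) := by
            exact Nat.mul_le_mul_left 2 IH
        _ = (2 * (n / 2)) * (Nat.log 2 n + 1) := by
            have h3 : Nat.log 2 (n / 2) + 2 = Nat.log 2 n + 1 := by omega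
            rw [h3]; ring
        _ ≤ n * (Nat.log 2 n + 1) := Nat.mul_le_mul_right _ (by omega)
    calc ∑ i ∈ (Finset.Icc 1 n).filter (fun i => 2 ∣ i), 2 ^ padicValNat 2 i
          + ∑ i ∈ (Finset.Icc 1 n).filter (fun i => ¬ 2 ∣ i), 2 ^ padicValNat 2 i
        ≤ n * (Nat.log 2 n + 1) + n := by rw [heven]; exact Nat.add_le_add hkey hodd
      _ = n * (Nat.log 2 n + 2) := by ring
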